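/- Assume λ₂ = 0 and set a_n = k_n/k̂_{n-1}, b_n = k̂_n/k_{n-1}. Then a_{n+1} b_n = c_{n+1} c_n for all n ≥ 1. -/

import Mathlib

open Polynomial MeasureTheory Filter Topology

/-- The Freud inner product `⟨f,g⟩_F = ∫_ℝ f(x) g(x) e^{-x⁴} dx`. -/
noncomputable def innerF (f g : Polynomial ℝ) : ℝ :=
  ∫ x : ℝ, f.eval x * g.eval x * Real.exp (-x ^ 4)


/-- The Sobolev inner product
`⟨f,g⟩_S = ⟨f,g⟩_F + λ₁ f(0) g(0) + λ₂ f'(0) g'(0)`. -/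
noncomputable def innerS (l1 l2 : ℝ) (f g : Polynomial ℝ) : ℝ :=
  innerF f g + l1 * f.eval 0 * g.eval 0
    + l2 * (Polynomial.derivative f).eval 0 * (Polynomial.derivative g).eval 0


lemma aux_int_pow (m : ℕ) : Integrable (fun x : ℝ => x ^ m * Real.exp (-x ^ 2)) := by
  have hs : (-1 : ℝ) < (m : ℝ) := neg_one_lt_zero.trans_le (Nat.cast_nonneg m)
  have h := integrable_rpow_mul_exp_neg_mul_sq (b := 1) one_pos hs
  simpa [Real.rpow_natCast] using h

lemma aux_int_abs_pow (m : ℕ) : Integrable (fun x : ℝ => |x| ^ m * Real.exp (-x ^ 2)) := by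
  have h := (aux_int_pow m).abs
  simpa [abs_mul, abs_pow, Real.abs_exp] using h

lemma integrable_monomial_exp (m : ℕ) :
    Integrable (fun x : ℝ => x ^ m * Real.exp (-x ^ 4)) := by
  apply Integrable.mono' ((aux_int_abs_pow m).const_mul (Real.exp 1))
  · exact (continuous_pow m |>.mul (Real.continuous_exp.comp (by continuity))).aestronglyMeasurable
  · filter_upwards with x
    rw [Real.norm_eq_abs, abs_mul, abs_pow, Real.abs_exp]
    have h1 : Real.exp (-x ^ 4) ≤ Real.exp 1 * Real.exp (-x ^ 2) := by
      rw [← Real.exp_add]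
      apply Real.exp_le_exp.mpr
      nlinarith [sq_nonneg (x ^ 2 - 1)]
    calc |x| ^ m * Real.exp (-x ^ 4) ≤ |x| ^ m * (Real.exp 1 * Real.exp (-x ^ 2)) := by
          exact mul_le_mul_of_nonneg_left h1 (by positivity)
      _ = Real.exp 1 * (|x| ^ m * Real.exp (-x ^ 2)) := by ring



lemma integrable_poly_exp (f : Polynomial ℝ) :
    Integrable (fun x : ℝ => f.eval x * Real.exp (-x ^ 4)) := by
  have heq : (fun x : ℝ => f.eval x * Real.exp (-x ^ 4)) =
      fun x : ℝ => ∑ m ∈ Finset.range (f.natDegree + 1),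
        f.coeff m * (x ^ m * Real.exp (-x ^ 4)) := by
    funext x
    rw [Polynomial.eval_eq_sum_range, Finset.sum_mul]
    simp [mul_assoc]
  rw [heq]
  exact integrable_finset_sum _ fun m _ => (integrable_monomial_exp m).const_mul _

lemma integrable_inner (f g : Polynomial ℝ) :
    Integrable (fun x : ℝ => f.eval x * g.eval x * Real.exp (-x ^ 4)) := by
  simpa [Polynomial.eval_mul] using integrable_poly_exp (f * g)

lemma innerF_comm (f g : Polynomial ℝ) : innerF f g = innerF g f := by
  unfold innerF; congr 1; funext x; ring

lemma innerF_add_left (f g h : Polynomial ℝ) :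
    innerF (f + g) h = innerF f h + innerF g h := by
  unfold innerF
  rw [← integral_add (integrable_inner f h) (integrable_inner g h)]
  congr 1; funext x; simp [Polynomial.eval_add]; ring

lemma innerF_Cmul_left (r : ℝ) (f g : Polynomial ℝ) :
    innerF (C r * f) g = r * innerF f g := by
  unfold innerF
  rw [← integral_const_mul]
  congr 1; funext x; simp; ring

lemma innerF_X_mul (f g : Polynomial ℝ) : innerF (X * f) g = innerF f (X * g) := by
  unfold innerF; congr 1; funext x; simp; ring

lemma innerF_sum_right {ι : Type*} (f : Polynomial ℝ) (s : Finset ι) (g : ι → Polynomial ℝ) :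
    innerF f (∑ i ∈ s, g i) = ∑ i ∈ s, innerF f (g i) := by
  unfold innerF
  rw [← integral_finset_sum _ (fun i _ => integrable_inner f (g i))]
  congr 1; funext x
  rw [Polynomial.eval_finset_sum, Finset.mul_sum, Finset.sum_mul]

lemma innerF_Cmul_right (r : ℝ) (f g : Polynomial ℝ) :
    innerF f (C r * g) = r * innerF f g := by
  rw [innerF_comm, innerF_Cmul_left, innerF_comm]

lemma orth_ext (P : ℕ → Polynomial ℝ)
    (hPorth : ∀ n m : ℕ, m < n → innerF (P n) (X ^ m) = 0)
    (n : ℕ) (g : Polynomial ℝ) (hg : g.natDegree < n) : innerF (P n) g = 0 := by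
  conv_lhs => rw [g.as_sum_range' n hg]
  rw [innerF_sum_right]
  apply Finset.sum_eq_zero
  intro i hi
  rw [← Polynomial.C_mul_X_pow_eq_monomial, innerF_Cmul_right,
    hPorth n i (Finset.mem_range.mp hi), mul_zero]

lemma innerF_self_pos (f : Polynomial ℝ) (hf : f ≠ 0) : 0 < innerF f f := by
  unfold innerF
  have hnn : ∀ x : ℝ, 0 ≤ f.eval x * f.eval x * Real.exp (-x ^ 4) := fun x => by
    have := Real.exp_pos (-x ^ 4); nlinarith [mul_self_nonneg (f.eval x)]
  rw [integral_pos_iff_support_of_nonneg hnn (integrable_inner f f)]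
  have hsupp : Function.support (fun x : ℝ => f.eval x * f.eval x * Real.exp (-x ^ 4)) =
      {x : ℝ | f.eval x ≠ 0} := by
    ext x
    simp only [Function.mem_support, Set.mem_setOf_eq]
    constructor
    · intro h hx; simp [hx] at h
    · intro h
      have := Real.exp_pos (-x ^ 4)
      positivity
  rw [hsupp]
  by_contra h
  push_neg at h
  have h0 : volume {x : ℝ | f.eval x ≠ 0} = 0 := le_antisymm h zero_le
  have hz : volume {x : ℝ | f.eval x = 0} = 0 := by
    have hfin : {x : ℝ | f.eval x = 0}.Finite := Polynomial.finite_setOf_isRoot hf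
    exact hfin.measure_zero _
  have : (volume : Measure ℝ) Set.univ ≤ 0 := by
    have : (Set.univ : Set ℝ) ⊆ {x | f.eval x ≠ 0} ∪ {x | f.eval x = 0} := by
      intro x _; by_cases hx : f.eval x = 0 <;> simp [hx]
    calc volume (Set.univ : Set ℝ) ≤ volume ({x | f.eval x ≠ 0} ∪ {x | f.eval x = 0}) :=
          measure_mono this
      _ ≤ volume {x : ℝ | f.eval x ≠ 0} + volume {x : ℝ | f.eval x = 0} := measure_union_le _ _
      _ = 0 := by rw [h0, hz, add_zero]
  simp [Real.volume_univ] at this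


/-- Case `λ₂ = 0`: with `a n = k n / k̂ (n-1)` and `b n = k̂ n / k (n-1)`,
`a_{n+1} b_n = c_{n+1} c_n` for all `n ≥ 1`. -/

theorem sobolev_freud_ab_identity
    (l1 : ℝ) (hl1 : 0 ≤ l1)
    (P Q : ℕ → Polynomial ℝ) (k khat : ℕ → ℝ)
    (hPmonic : ∀ n, (P n).Monic) (hPdeg : ∀ n, (P n).natDegree = n)
    (hPorth : ∀ n m : ℕ, m < n → innerF (P n) (X ^ m) = 0)
    (hQmonic : ∀ n, (Q n).Monic) (hQdeg : ∀ n, (Q n).natDegree = n)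
    (hQorth : ∀ n m : ℕ, m < n → innerS l1 0 (Q n) (X ^ m) = 0)
    (hk : ∀ n, k n = innerF (P n) (P n))
    (hkhat : ∀ n, khat n = innerS l1 0 (Q n) (Q n))
    (c : ℕ → ℝ) (hP0 : P 0 = 1) (hP1 : P 1 = X)
    (hrec : ∀ n, 1 ≤ n → X * P n = P (n + 1) + C (c n) * P (n - 1))
    (a b : ℕ → ℝ) (ha : ∀ n, a n = k n / khat (n - 1))
    (hb : ∀ n, b n = khat n / k (n - 1)) :
    ∀ n, 1 ≤ n → a (n + 1) * b n = c (n + 1) * c n := by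
  have hkpos : ∀ n, 0 < k n := fun n => by
    rw [hk]; exact innerF_self_pos _ (hPmonic n).ne_zero
  have hkhpos : ∀ n, 0 < khat n := fun n => by
    rw [hkhat]
    unfold innerS
    have h1 := innerF_self_pos (Q n) (hQmonic n).ne_zero
    nlinarith [mul_self_nonneg ((Q n).eval 0)]
  have hck : ∀ n, 1 ≤ n → c n * k (n - 1) = k n := by
    intro n hn
    have hXP : innerF (X * P n) (P (n - 1)) = c n * k (n - 1) := by
      rw [hrec n hn, innerF_add_left, innerF_Cmul_left,
        orth_ext P hPorth (n + 1) (P (n - 1)) (by rw [hPdeg]; omega), zero_add, hk]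
    have hXP2 : innerF (X * P n) (P (n - 1)) = k n := by
      rw [innerF_X_mul]
      rcases Nat.lt_or_ge n 2 with h2 | h2
      · have hn1 : n = 1 := by omega
        subst hn1
        rw [hP0, mul_one, ← hP1, ← hk]
      · have h3 : 1 ≤ n - 1 := by omega
        have e1 : n - 1 + 1 = n := by omega
        rw [hrec (n - 1) h3, e1, innerF_comm, innerF_add_left, innerF_Cmul_left,
          innerF_comm (P (n - 1 - 1)) (P n),
          orth_ext P hPorth n (P (n - 1 - 1)) (by rw [hPdeg]; omega),
          mul_zero, add_zero, ← hk]
    rw [← hXP, hXP2]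
  intro n hn
  have h1 : c (n + 1) * k n = k (n + 1) := hck (n + 1) (by omega)
  have h2 : c n * k (n - 1) = k n := hck n hn
  rw [ha, hb, show n + 1 - 1 = n from rfl]
  have hkh := (hkhpos n).ne'
  have hk1 := (hkpos (n - 1)).ne'
  have hk0 := (hkpos n).ne'
  field_simp
  linear_combination - h1 - c (n + 1) * h2
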